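/- Let m ≥ c·P·log P balls have weights that are independent geometrically distributed random variables with expectation μ, and let the balls be placed independently and uniformly at random into P bins. Then with high probability in P, every bin receives total weight O(μ·m/P). -/

import Mathlib

open MeasureTheory ProbabilityTheory

section AuxLemmas

variable {Ω : Type} [MeasureSpace Ω] [IsProbabilityMeasure (ℙ : Measure Ω)]

lemma aux_lintegral_prod {ι : Type*} {Z : ι → Ω → ENNReal}
    (hZ : ∀ i, Measurable (Z i))
    (hind : iIndepFun Z ℙ) (s : Finset ι) :
    ∫⁻ ω, ∏ i ∈ s, Z i ω ∂ℙ = ∏ i ∈ s, ∫⁻ ω, Z i ω ∂ℙ := by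
  classical
  induction s using Finset.induction with
  | empty => simp
  | @insert a s ha ih =>
    have hmul : ∫⁻ ω, ((Z a) * (∏ i ∈ s, Z i)) ω ∂ℙ
        = (∫⁻ ω, Z a ω ∂ℙ) * ∫⁻ ω, (∏ i ∈ s, Z i) ω ∂ℙ :=
      lintegral_mul_eq_lintegral_mul_lintegral_of_indepFun (hZ a)
        (by rw [Finset.prod_fn]; exact s.measurable_prod (fun i _ => hZ i))
        ((hind.indepFun_finset_prod_of_notMem hZ ha).symm)
    simp only [Pi.mul_apply, Finset.prod_apply] at hmul
    rw [Finset.prod_insert ha]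
    simp only [Finset.prod_insert ha]
    rw [hmul, ih]

omit [IsProbabilityMeasure (ℙ : Measure Ω)] in
lemma aux_lintegral_nat (W : Ω → ℕ) (hW : Measurable W) (g : ℕ → ENNReal) :
    ∫⁻ ω, g (W ω) ∂ℙ = ∑' n, g n * ℙ {ω | W ω = n} := by
  have h : ∫⁻ ω, g (W ω) ∂ℙ = ∫⁻ n, g n ∂((ℙ : Measure Ω).map W) :=
    (lintegral_map (measurable_of_countable g) hW).symm
  rw [h, lintegral_countable']
  apply tsum_congr
  intro n
  rw [Measure.map_apply hW (measurableSet_singleton n)]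
  rfl

/-- Core geometric series estimate. -/
lemma aux_geom_core (p q t : ℝ) (hp0 : 0 < p) (hp1 : p ≤ 1) (hq : q = 1 - p)
    (ht : t = p / 2) :
    haveI r := q * Real.exp t
    0 ≤ r ∧ r < 1 ∧ p * Real.exp t * (1 - r)⁻¹ ≤ 4 := by
  have hq0 : 0 ≤ q := by rw [hq]; linarith
  have ht0 : 0 < t := by rw [ht]; linarith
  have ht1 : t ≤ 1 / 2 := by rw [ht]; linarith
  have hep : 0 < Real.exp t := Real.exp_pos t
  have hexp1 : Real.exp t * (1 - t) ≤ 1 := by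
    have h := Real.add_one_le_exp (-t)
    rw [Real.exp_neg] at h
    have h2 := mul_le_mul_of_nonneg_left h hep.le
    rw [mul_inv_cancel₀ hep.ne'] at h2
    nlinarith [h2]
  have hqe : q * Real.exp t ≤ 1 - t := by
    have hq2 : q = 1 - 2 * t := by rw [hq, ht]; ring
    nlinarith [hexp1, hep, ht0, ht1]
  have hr0 : 0 ≤ q * Real.exp t := mul_nonneg hq0 hep.le
  have hr1 : q * Real.exp t < 1 := lt_of_le_of_lt hqe (by linarith)
  refine ⟨hr0, hr1, ?_⟩
  have h1r : t ≤ 1 - q * Real.exp t := by linarith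
  have hinv : (1 - q * Real.exp t)⁻¹ ≤ t⁻¹ := inv_anti₀ ht0 h1r
  have hexp_half : Real.exp t ≤ 2 := by
    have h2 : Real.exp t ≤ Real.exp (1/2) := Real.exp_le_exp.mpr ht1
    have h3 : Real.exp (1/2) ^ 2 = Real.exp 1 := by
      rw [← Real.exp_nat_mul]; norm_num
    nlinarith [Real.exp_pos (1/2 : ℝ), Real.exp_one_lt_d9, h2, h3]
  have hone : p * Real.exp t * t⁻¹ = 2 * Real.exp t := by
    rw [ht]; field_simp
  calc p * Real.exp t * (1 - q * Real.exp t)⁻¹ ≤ p * Real.exp t * t⁻¹ :=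
        mul_le_mul_of_nonneg_left hinv (by positivity)
    _ = 2 * Real.exp t := hone
    _ ≤ 4 := by linarith

lemma aux_geom_mgf (W : Ω → ℕ) (hW : Measurable W) (p q t : ℝ)
    (hp0 : 0 < p) (hp1 : p ≤ 1) (hqdef : q = 1 - p) (htdef : t = p / 2)
    (hpmf : ∀ j : ℕ, 1 ≤ j → ℙ {ω | W ω = j} = ENNReal.ofReal (p * q ^ (j - 1))) :
    ∫⁻ ω, ENNReal.ofReal (Real.exp (t * (W ω))) ∂ℙ ≤ ENNReal.ofReal 4 := by
  obtain ⟨hr0, hr1, hbound⟩ := aux_geom_core p q t hp0 hp1 hqdef htdef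
  have hq0 : 0 ≤ q := by rw [hqdef]; linarith
  have hq1 : q < 1 := by rw [hqdef]; linarith
  have hWmeas : ∀ n : ℕ, MeasurableSet {ω | W ω = n} :=
    fun n => hW (measurableSet_singleton n)
  have htot : ∑' n : ℕ, ℙ {ω | W ω = n} = 1 := by
    have hdisj : Pairwise (Function.onFun Disjoint (fun n : ℕ => {ω | W ω = n})) :=
      fun a b hab => Set.disjoint_left.mpr (fun ω h1 h2 => hab (h1.symm.trans h2))
    rw [← measure_iUnion hdisj hWmeas]
    have hu : (⋃ n : ℕ, {ω | W ω = n}) = Set.univ := by ext ω; simp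
    rw [hu, measure_univ]
  have htail : ∑' k : ℕ, ℙ {ω | W ω = k + 1} = 1 := by
    have heq : ∀ k : ℕ, ℙ {ω | W ω = k + 1} = ENNReal.ofReal (p * q ^ k) := by
      intro k
      rw [hpmf (k+1) (by omega)]
      simp
    simp_rw [heq]
    have hsum : Summable (fun k : ℕ => p * q ^ k) :=
      (summable_geometric_of_lt_one hq0 hq1).mul_left p
    have h1 : ENNReal.ofReal (∑' k : ℕ, (p * q ^ k)) = ∑' k : ℕ, ENNReal.ofReal (p * q ^ k) :=
      ENNReal.ofReal_tsum_of_nonneg (fun k => by positivity) hsum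
    rw [← h1, tsum_mul_left, tsum_geometric_of_lt_one hq0 hq1,
      show (1:ℝ) - q = p by rw [hqdef]; ring, mul_inv_cancel₀ hp0.ne', ENNReal.ofReal_one]
  have hW0 : ℙ {ω | W ω = 0} = 0 := by
    have h := tsum_eq_zero_add' (f := fun n : ℕ => ℙ {ω | W ω = n}) ENNReal.summable
    rw [htot, htail] at h
    have h2 := ENNReal.add_sub_cancel_right (a := ℙ {ω | W ω = 0}) (b := (1:ENNReal))
      ENNReal.one_ne_top
    rw [← h] at h2
    simpa using h2.symm
  rw [aux_lintegral_nat W hW (fun n => ENNReal.ofReal (Real.exp (t * n)))]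
  rw [tsum_eq_zero_add' ENNReal.summable]
  rw [hW0, mul_zero, zero_add]
  have hterm : ∀ k : ℕ, ENNReal.ofReal (Real.exp (t * ((k+1 : ℕ):ℝ))) * ℙ {ω | W ω = k + 1}
      = ENNReal.ofReal ((p * Real.exp t) * (q * Real.exp t) ^ k) := by
    intro k
    rw [hpmf (k+1) (by omega), ← ENNReal.ofReal_mul (Real.exp_nonneg _)]
    congr 1
    have h3 : Real.exp (t * ((k+1 : ℕ):ℝ)) = Real.exp t ^ k * Real.exp t := by
      push_cast
      rw [mul_add, mul_one, Real.exp_add, mul_comm t (k:ℝ), Real.exp_nat_mul]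
    rw [h3, mul_pow]
    simp only [Nat.add_sub_cancel]
    ring
  simp_rw [hterm]
  have hsum2 : Summable (fun k : ℕ => (p * Real.exp t) * (q * Real.exp t) ^ k) :=
    (summable_geometric_of_lt_one hr0 hr1).mul_left _
  have h4 : ENNReal.ofReal (∑' k : ℕ, (p * Real.exp t) * (q * Real.exp t) ^ k)
      = ∑' k : ℕ, ENNReal.ofReal ((p * Real.exp t) * (q * Real.exp t) ^ k) :=
    ENNReal.ofReal_tsum_of_nonneg (fun k => by positivity) hsum2
  rw [← h4]
  apply ENNReal.ofReal_le_ofReal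
  rw [tsum_mul_left, tsum_geometric_of_lt_one hr0 hr1]
  exact hbound

lemma aux_ball {P : ℕ} (hP : 2 ≤ P) (X : Ω → Fin P) (Wf : Ω → ℕ) (b : Fin P)
    (hX : Measurable X) (hW : Measurable Wf) (hind : IndepFun X Wf ℙ)
    (hunif : ℙ {ω | X ω = b} = (P : ENNReal)⁻¹) (t : ℝ)
    (hmgf : ∫⁻ ω, ENNReal.ofReal (Real.exp (t * (Wf ω))) ∂ℙ ≤ ENNReal.ofReal 4) :
    ∫⁻ ω, (if X ω = b then ENNReal.ofReal (Real.exp (t * (Wf ω))) else 1) ∂ℙ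
      ≤ ENNReal.ofReal (Real.exp (3 / P)) := by
  classical
  have hsb : MeasurableSet {ω | X ω = b} := hX (measurableSet_singleton b)
  have hPpos : (0:ℝ) < P := by
    have : (2:ℝ) ≤ P := by exact_mod_cast hP
    linarith
  set g1 : Fin P → ENNReal := fun x => if x = b then 1 else 0 with hg1
  set g2 : ℕ → ENNReal := fun w => ENNReal.ofReal (Real.exp (t * w)) with hg2
  have hsplit : (fun ω => if X ω = b then ENNReal.ofReal (Real.exp (t * (Wf ω))) else 1)
      = (fun ω => (if X ω = b then 0 else 1) + (g1 (X ω)) * (g2 (Wf ω))) := by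
    funext ω
    by_cases h : X ω = b <;> simp [h, hg1, hg2]
  rw [hsplit]
  have hm1 : Measurable (fun ω => if X ω = b then (0:ENNReal) else 1) :=
    Measurable.ite hsb measurable_const measurable_const
  rw [lintegral_add_left hm1]
  have hind1 : (fun ω => if X ω = b then (0:ENNReal) else 1)
      = ({ω | X ω = b}ᶜ).indicator (fun _ => 1) := by
    funext ω
    by_cases h : X ω = b <;> simp [h, Set.indicator]
  have hfirst : ∫⁻ ω, (if X ω = b then (0:ENNReal) else 1) ∂ℙ = 1 - (P : ENNReal)⁻¹ := by
    rw [hind1]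
    rw [show ({ω | X ω = b}ᶜ).indicator (fun _ : Ω => (1:ENNReal)) = ({ω | X ω = b}ᶜ).indicator 1
      from rfl]
    rw [lintegral_indicator_one hsb.compl]
    rw [prob_compl_eq_one_sub hsb, hunif]
  have hprod : ∫⁻ ω, g1 (X ω) * g2 (Wf ω) ∂ℙ
      = (∫⁻ ω, g1 (X ω) ∂ℙ) * ∫⁻ ω, g2 (Wf ω) ∂ℙ := by
    have := lintegral_mul_eq_lintegral_mul_lintegral_of_indepFun
      (μ := (ℙ : Measure Ω)) (f := fun ω => g1 (X ω)) (g := fun ω => g2 (Wf ω))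
      ((measurable_of_countable g1).comp hX) ((measurable_of_countable g2).comp hW)
      (hind.comp (measurable_of_countable g1) (measurable_of_countable g2))
    simpa [Pi.mul_apply] using this
  have hind2 : (fun ω => g1 (X ω)) = ({ω | X ω = b}).indicator (fun _ => 1) := by
    funext ω
    by_cases h : X ω = b <;> simp [h, hg1, Set.indicator]
  have hsecond1 : ∫⁻ ω, g1 (X ω) ∂ℙ = (P : ENNReal)⁻¹ := by
    rw [hind2]
    rw [show ({ω | X ω = b}).indicator (fun _ : Ω => (1:ENNReal)) = ({ω | X ω = b}).indicator 1
      from rfl]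
    rw [lintegral_indicator_one hsb, hunif]
  have hsecond : ∫⁻ ω, g1 (X ω) * g2 (Wf ω) ∂ℙ ≤ (P : ENNReal)⁻¹ * ENNReal.ofReal 4 := by
    rw [hprod, hsecond1]
    exact mul_le_mul_right hmgf _
  have hPinv_le : (P : ENNReal)⁻¹ ≤ 1 := by
    rw [ENNReal.inv_le_one]
    exact_mod_cast Nat.one_le_of_lt hP
  rw [hfirst]
  calc (1 - (P : ENNReal)⁻¹) + ∫⁻ ω, g1 (X ω) * g2 (Wf ω) ∂ℙ
      ≤ (1 - (P : ENNReal)⁻¹) + (P : ENNReal)⁻¹ * ENNReal.ofReal 4 :=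
        add_le_add_right hsecond _
    _ = 1 + (P : ENNReal)⁻¹ * ENNReal.ofReal 3 := by
        rw [show (4:ℝ) = 1 + 3 by norm_num,
          ENNReal.ofReal_add one_pos.le (by norm_num), ENNReal.ofReal_one, mul_add, mul_one,
          ← add_assoc, tsub_add_cancel_of_le hPinv_le]
    _ = ENNReal.ofReal (1 + 3 / P) := by
        rw [show ((P:ENNReal))⁻¹ = ENNReal.ofReal ((P:ℝ)⁻¹) by
          rw [ENNReal.ofReal_inv_of_pos hPpos, ENNReal.ofReal_natCast]]
        rw [← ENNReal.ofReal_mul (by positivity), ← ENNReal.ofReal_one,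
          ← ENNReal.ofReal_add (by norm_num) (by positivity)]
        congr 1
        ring
    _ ≤ ENNReal.ofReal (Real.exp (3 / P)) := by
        apply ENNReal.ofReal_le_ofReal
        have := Real.add_one_le_exp (3 / (P:ℝ))
        linarith

end AuxLemmas

/-- Per-ball contribution to bin `b`, as an `ℝ≥0∞`-valued multiplicative weight. -/
noncomputable def binZ (P : ℕ) (b : Fin P) (t : ℝ) : Fin P × ℕ → ENNReal :=
  fun pw => if pw.1 = b then ENNReal.ofReal (Real.exp (t * pw.2)) else 1

/-- m ≥ c·P·log P balls with independent geometric weights of expectation μ,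
placed independently uniformly at random into P bins; whp every bin gets weight O(μ·m/P). -/
theorem stmt_4 :
    ∀ c : ℝ, 0 < c → ∃ C : ℝ, 0 < C ∧ ∃ c' : ℝ, 1 ≤ c' ∧
    ∀ (P m : ℕ), 2 ≤ P → (c * P * Real.log P ≤ (m : ℝ)) →
    ∀ (μ : ℝ), 1 ≤ μ →
    ∀ (Ω : Type) [MeasureSpace Ω] [IsProbabilityMeasure (ℙ : Measure Ω)]
      (X : Fin m → Ω → Fin P) (W : Fin m → Ω → ℕ),
      (∀ i, Measurable (X i)) → (∀ i, Measurable (W i)) →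
      iIndepFun (fun i ω => (X i ω, W i ω)) ℙ →
      (∀ i, IndepFun (X i) (W i) ℙ) →
      (∀ i b, ℙ {ω | X i ω = b} = (P : ENNReal)⁻¹) →
      (∀ i, ∀ j : ℕ, 1 ≤ j →
        ℙ {ω | W i ω = j} = ENNReal.ofReal ((1 / μ) * (1 - 1 / μ) ^ (j - 1))) →
      1 - ENNReal.ofReal ((P : ℝ) ^ (-c')) ≤
        ℙ {ω | ∀ b : Fin P,
          (∑ i ∈ Finset.univ.filter (fun i => X i ω = b), (W i ω : ℝ)) ≤ C * μ * m / P} := by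
  intro c hc
  refine ⟨6 + 4 / c, by positivity, 1, le_refl 1, ?_⟩
  intro P m hP hm μ hμ Ω _ _ X W hXm hWm hIndep hXW hXunif hWpmf
  classical
  have hμ0 : (0:ℝ) < μ := lt_of_lt_of_le one_pos hμ
  have hPposR : (0:ℝ) < P := by
    have : (2:ℝ) ≤ P := by exact_mod_cast hP
    linarith
  -- the tilt parameter
  have hmgf : ∀ i, ∫⁻ ω, ENNReal.ofReal (Real.exp ((1/μ/2) * (W i ω))) ∂ℙ
      ≤ ENNReal.ofReal 4 := by
    intro i
    exact aux_geom_mgf (W i) (hWm i) (1/μ) (1 - 1/μ) (1/μ/2) (by positivity)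
      ((div_le_one hμ0).mpr hμ) rfl rfl (hWpmf i)
  have ht0 : (0:ℝ) < 1/μ/2 := by positivity
  -- per-bin tail bound
  have hbin : ∀ b : Fin P,
      ℙ {ω | (6 + 4/c) * μ * m / P < ∑ i : Fin m, (if X i ω = b then ((W i ω : ℕ):ℝ) else 0)}
        ≤ ENNReal.ofReal ((P:ℝ) ^ (-2 : ℝ)) := by
    intro b
    have hζm : Measurable (binZ P b (1/μ/2)) := measurable_of_countable _
    have hZm : ∀ i, Measurable (fun ω => binZ P b (1/μ/2) (X i ω, W i ω)) :=
      fun i => hζm.comp ((hXm i).prodMk (hWm i))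
    have hZind : iIndepFun
        (fun i ω => binZ P b (1/μ/2) (X i ω, W i ω)) ℙ :=
      hIndep.comp (fun _ => binZ P b (1/μ/2)) (fun _ => hζm)
    have hZint : ∀ i, ∫⁻ ω, binZ P b (1/μ/2) (X i ω, W i ω) ∂ℙ
        ≤ ENNReal.ofReal (Real.exp (3 / P)) := by
      intro i
      exact aux_ball hP (X i) (W i) b (hXm i) (hWm i) (hXW i) (hXunif i b) (1/μ/2) (hmgf i)
    have hprodint : ∫⁻ ω, ∏ i : Fin m, binZ P b (1/μ/2) (X i ω, W i ω) ∂ℙ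
        ≤ ENNReal.ofReal (Real.exp (3 * m / P)) := by
      rw [aux_lintegral_prod hZm hZind Finset.univ]
      calc ∏ i : Fin m, ∫⁻ ω, binZ P b (1/μ/2) (X i ω, W i ω) ∂ℙ
          ≤ ∏ _i : Fin m, ENNReal.ofReal (Real.exp (3 / P)) :=
            Finset.prod_le_prod' (fun i _ => hZint i)
        _ = ENNReal.ofReal (Real.exp (3 / P)) ^ m := by
            rw [Finset.prod_const, Finset.card_univ, Fintype.card_fin]
        _ = ENNReal.ofReal (Real.exp (3 * m / P)) := by
            rw [← ENNReal.ofReal_pow (Real.exp_nonneg _), ← Real.exp_nat_mul]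
            congr 1
            ring
    have hkey : ∀ ω, ENNReal.ofReal
          (Real.exp ((1/μ/2) * (∑ i : Fin m, (if X i ω = b then ((W i ω : ℕ):ℝ) else 0))))
        = ∏ i : Fin m, binZ P b (1/μ/2) (X i ω, W i ω) := by
      intro ω
      rw [Finset.mul_sum, Real.exp_sum,
        ENNReal.ofReal_prod_of_nonneg (fun i _ => Real.exp_nonneg _)]
      apply Finset.prod_congr rfl
      intro i _
      by_cases h : X i ω = b <;> simp [binZ, h]
    set ε : ENNReal := ENNReal.ofReal (Real.exp ((1/μ/2) * ((6 + 4/c) * μ * m / P))) with hε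
    have hεpos : (0:ℝ) < Real.exp ((1/μ/2) * ((6 + 4/c) * μ * m / P)) := Real.exp_pos _
    have hε0 : ε ≠ 0 := by
      rw [hε]
      exact (ENNReal.ofReal_pos.mpr hεpos).ne'
    have hεtop : ε ≠ ⊤ := by rw [hε]; exact ENNReal.ofReal_ne_top
    have hsubset : {ω | (6 + 4/c) * μ * m / P
          < ∑ i : Fin m, (if X i ω = b then ((W i ω : ℕ):ℝ) else 0)}
        ⊆ {ω | ε ≤ ∏ i : Fin m, binZ P b (1/μ/2) (X i ω, W i ω)} := by
      intro ω hω
      simp only [Set.mem_setOf_eq] at hω ⊢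
      rw [← hkey ω, hε]
      exact ENNReal.ofReal_le_ofReal
        (Real.exp_le_exp.mpr (mul_le_mul_of_nonneg_left hω.le ht0.le))
    have hfm : Measurable (fun ω => ∏ i : Fin m, binZ P b (1/μ/2) (X i ω, W i ω)) :=
      Finset.measurable_prod _ (fun i _ => hZm i)
    have hmarkov := mul_meas_ge_le_lintegral₀ (μ := (ℙ : Measure Ω)) hfm.aemeasurable ε
    have hchain : ℙ {ω | ε ≤ ∏ i : Fin m, binZ P b (1/μ/2) (X i ω, W i ω)}
        ≤ ε⁻¹ * ∫⁻ ω, ∏ i : Fin m, binZ P b (1/μ/2) (X i ω, W i ω) ∂ℙ := by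
      rw [← one_mul (ℙ _), ← ENNReal.inv_mul_cancel hε0 hεtop, mul_assoc]
      exact mul_le_mul_right hmarkov _
    have hexp_bound : (Real.exp ((1/μ/2) * ((6 + 4/c) * μ * m / P)))⁻¹ * Real.exp (3 * m / P)
        ≤ (P:ℝ) ^ (-2 : ℝ) := by
      rw [← Real.exp_neg, ← Real.exp_add]
      have hta : (1/μ/2) * ((6 + 4/c) * μ * m / P) = (6 + 4/c) * m / (2 * P) := by
        field_simp
      have hmP : c * Real.log P ≤ (m:ℝ) / P := by
        rw [le_div_iff₀ hPposR]
        calc c * Real.log P * P = c * P * Real.log P := by ring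
          _ ≤ m := hm
      have harg : -((1/μ/2) * ((6 + 4/c) * μ * m / P)) + 3 * m / P = -((2/c) * ((m:ℝ)/P)) := by
        rw [hta]
        field_simp
        ring
      rw [harg]
      have hlog2 : 2 * Real.log P ≤ (2/c) * ((m:ℝ)/P) := by
        have h1 := mul_le_mul_of_nonneg_left hmP (le_of_lt (by positivity : (0:ℝ) < 2/c))
        have h2 : (2/c) * (c * Real.log P) = 2 * Real.log P := by
          field_simp
        linarith
      calc Real.exp (-((2/c) * ((m:ℝ)/P))) ≤ Real.exp (-(2 * Real.log P)) :=
            Real.exp_le_exp.mpr (by linarith)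
        _ = (P:ℝ) ^ (-2 : ℝ) := by
            rw [Real.rpow_def_of_pos hPposR]
            congr 1
            ring
    calc ℙ {ω | (6 + 4/c) * μ * m / P
          < ∑ i : Fin m, (if X i ω = b then ((W i ω : ℕ):ℝ) else 0)}
        ≤ ℙ {ω | ε ≤ ∏ i : Fin m, binZ P b (1/μ/2) (X i ω, W i ω)} := measure_mono hsubset
      _ ≤ ε⁻¹ * ∫⁻ ω, ∏ i : Fin m, binZ P b (1/μ/2) (X i ω, W i ω) ∂ℙ := hchain
      _ ≤ ε⁻¹ * ENNReal.ofReal (Real.exp (3 * m / P)) := mul_le_mul_right hprodint _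
      _ = ENNReal.ofReal ((Real.exp ((1/μ/2) * ((6 + 4/c) * μ * m / P)))⁻¹ * Real.exp (3 * m / P))
          := by
            rw [hε, ← ENNReal.ofReal_inv_of_pos hεpos,
              ← ENNReal.ofReal_mul (by positivity)]
      _ ≤ ENNReal.ofReal ((P:ℝ) ^ (-2 : ℝ)) := ENNReal.ofReal_le_ofReal hexp_bound
  -- measurability of the per-bin load
  have hSmeas : ∀ b : Fin P,
      Measurable (fun ω => ∑ i : Fin m, (if X i ω = b then ((W i ω : ℕ):ℝ) else 0)) := by
    intro b
    apply Finset.measurable_sum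
    intro i _
    exact Measurable.ite (hXm i (measurableSet_singleton b))
      ((measurable_of_countable (fun n : ℕ => (n:ℝ))).comp (hWm i)) measurable_const
  -- the good event
  have hsetE : {ω | ∀ b : Fin P,
        (∑ i ∈ Finset.univ.filter (fun i => X i ω = b), ((W i ω : ℕ):ℝ))
          ≤ (6 + 4/c) * μ * m / P}
      = ⋂ b : Fin P, {ω | ∑ i : Fin m, (if X i ω = b then ((W i ω : ℕ):ℝ) else 0)
          ≤ (6 + 4/c) * μ * m / P} := by
    ext ω
    simp only [Set.mem_setOf_eq, Set.mem_iInter]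
    apply forall_congr'
    intro b
    rw [Finset.sum_filter]
  have hEmeas : MeasurableSet (⋂ b : Fin P,
      {ω | ∑ i : Fin m, (if X i ω = b then ((W i ω : ℕ):ℝ) else 0)
        ≤ (6 + 4/c) * μ * m / P}) :=
    MeasurableSet.iInter (fun b => measurableSet_le (hSmeas b) measurable_const)
  rw [hsetE]
  -- complement bound
  have hEc : ℙ (⋂ b : Fin P, {ω | ∑ i : Fin m, (if X i ω = b then ((W i ω : ℕ):ℝ) else 0)
        ≤ (6 + 4/c) * μ * m / P})ᶜ ≤ ENNReal.ofReal ((P:ℝ) ^ (-(1:ℝ))) := by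
    have hsub : (⋂ b : Fin P, {ω | ∑ i : Fin m, (if X i ω = b then ((W i ω : ℕ):ℝ) else 0)
          ≤ (6 + 4/c) * μ * m / P})ᶜ
        ⊆ ⋃ b : Fin P, {ω | (6 + 4/c) * μ * m / P
          < ∑ i : Fin m, (if X i ω = b then ((W i ω : ℕ):ℝ) else 0)} := by
      intro ω hω
      simp only [Set.compl_iInter, Set.mem_iUnion, Set.mem_compl_iff, Set.mem_setOf_eq,
        not_le] at hω ⊢
      exact hω
    calc ℙ _ ≤ ℙ (⋃ b : Fin P, {ω | (6 + 4/c) * μ * m / P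
            < ∑ i : Fin m, (if X i ω = b then ((W i ω : ℕ):ℝ) else 0)}) := measure_mono hsub
      _ ≤ ∑ b : Fin P, ℙ {ω | (6 + 4/c) * μ * m / P
            < ∑ i : Fin m, (if X i ω = b then ((W i ω : ℕ):ℝ) else 0)} :=
          measure_iUnion_fintype_le _ _
      _ ≤ ∑ _b : Fin P, ENNReal.ofReal ((P:ℝ) ^ (-2 : ℝ)) :=
          Finset.sum_le_sum (fun b _ => hbin b)
      _ = (P : ENNReal) * ENNReal.ofReal ((P:ℝ) ^ (-2 : ℝ)) := by
          rw [Finset.sum_const, Finset.card_univ, Fintype.card_fin, nsmul_eq_mul]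
      _ = ENNReal.ofReal ((P:ℝ) * (P:ℝ) ^ (-2 : ℝ)) := by
          rw [ENNReal.ofReal_mul hPposR.le, ENNReal.ofReal_natCast]
      _ = ENNReal.ofReal ((P:ℝ) ^ (-(1:ℝ))) := by
          congr 1
          rw [show ((P:ℝ)) * (P:ℝ) ^ (-2 : ℝ) = (P:ℝ) ^ (1:ℝ) * (P:ℝ) ^ (-2 : ℝ) by
            rw [Real.rpow_one], ← Real.rpow_add hPposR]
          norm_num
  have h2 := prob_compl_eq_one_sub (μ := (ℙ : Measure Ω)) hEmeas.compl
  rw [compl_compl] at h2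
  rw [h2]
  exact tsub_le_tsub_left hEc 1
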